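/- Let G be a finite DAG and S ⊆ V a prefix subset. If u, v ∈ src(S̄) are distinct, then u and v are d-separated given S in G. -/

import Mathlib

open Relation

/-- Undirected adjacency induced by a directed edge relation. -/
def Adjacent {V : Type*} (E : V → V → Prop) (a b : V) : Prop := E a b ∨ E b a

/-- `x` is a collider on the path (vertex list) `p`: both neighboring edges point into `x`. -/
def IsCollider {V : Type*} (E : V → V → Prop) (p : List V) (x : V) : Prop :=
  ∃ l1 a b l2, p = l1 ++ a :: x :: b :: l2 ∧ E a x ∧ E b x

/-- A path (vertex list) is active given a conditioning set `C`:
every collider is in `C` or has a descendant in `C`, and no non-collider is in `C`. -/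
def ActivePath {V : Type*} (E : V → V → Prop) (C : Set V) (p : List V) : Prop :=
  (∀ x ∈ p, IsCollider E p x → ∃ d, ReflTransGen E x d ∧ d ∈ C) ∧
  (∀ x ∈ p, ¬ IsCollider E p x → x ∉ C)

/-- `p` is a path between `u` and `v`: consecutively adjacent, distinct vertices. -/
def IsPathBetween {V : Type*} (E : V → V → Prop) (u v : V) (p : List V) : Prop :=
  p.Chain' (Adjacent E) ∧ p.Nodup ∧ p.head? = some u ∧ p.getLast? = some v

/-- `u` and `v` are d-connected given `C`. -/
def DConn {V : Type*} (E : V → V → Prop) (C : Set V) (u v : V) : Prop :=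
  ∃ p, IsPathBetween E u v p ∧ ActivePath E C p

/-- `u` and `v` are d-separated given `C`. -/
def DSep {V : Type*} (E : V → V → Prop) (C : Set V) (u v : V) : Prop :=
  ¬ DConn E C u v

/-- `S` is a prefix (ancestrally closed) subset. -/
def IsPrefixSet {V : Type*} (E : V → V → Prop) (S : Set V) : Prop :=
  ∀ u v, E u v → v ∈ S → u ∈ S

/-- Source vertices of the induced subgraph on `T`: vertices of `T` with no parent in `T`. -/
def srcOf {V : Type*} (E : V → V → Prop) (T : Set V) : Set V :=
  {v | v ∈ T ∧ ∀ u, E u v → u ∉ T}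

/-- The edge relation is acyclic. -/
def Acyclic {V : Type*} (E : V → V → Prop) : Prop :=
  ∀ v, ¬ TransGen E v v

/-- `p` is a directed path from `u` to `v` (all edges forward). -/
def DirPath {V : Type*} (E : V → V → Prop) (u v : V) (p : List V) : Prop :=
  p.Chain' E ∧ p.head? = some u ∧ p.getLast? = some v


section Helpers
variable {V : Type*} (E : V → V → Prop)

/-- closure of prefix set under reflexive-transitive ancestors -/
lemma prefix_rtg {S : Set V} (hS : ∀ u v, E u v → v ∈ S → u ∈ S)
    {x d : V} (h : ReflTransGen E x d) (hd : d ∈ S) : x ∈ S := by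
  induction h with
  | refl => exact hd
  | tail _ e ih => exact ih (hS _ _ e hd)

/-- reachability along a forward chain -/
lemma chain_reach : ∀ (t : List V) (x : V), List.Chain' E (x :: t) →
    ∀ y ∈ x :: t, ReflTransGen E x y := by
  intro t
  induction t with
  | nil => intro x _ y hy; simp at hy; subst hy; exact ReflTransGen.refl
  | cons z t' ih =>
    intro x hc y hy
    rcases List.mem_cons.1 hy with h | h
    · subst h; exact ReflTransGen.refl
    · have hxz : E x z := (List.isChain_cons_cons.1 hc).1
      exact (ReflTransGen.single hxz).trans (ih z (List.isChain_cons_cons.1 hc).2 y h)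

/-- first backward edge decomposition -/
lemma first_flip : ∀ (p : List V), List.Chain' (Adjacent E) p →
    List.Chain' E p ∨ ∃ l1 a b l2, p = l1 ++ a :: b :: l2 ∧
      List.Chain' E (l1 ++ [a]) ∧ E b a := by
  intro p
  induction p with
  | nil => intro _; exact Or.inl List.isChain_nil
  | cons x t ih =>
    intro hc
    cases t with
    | nil => exact Or.inl (List.isChain_singleton x)
    | cons y t' =>
      have hxy : Adjacent E x y := (List.isChain_cons_cons.1 hc).1
      have hct : List.Chain' (Adjacent E) (y :: t') := (List.isChain_cons_cons.1 hc).2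
      by_cases hE : E x y
      · rcases ih hct with h | ⟨l1, a, b, l2, heq, hch, hba⟩
        · exact Or.inl (List.isChain_cons_cons.2 ⟨hE, h⟩)
        · refine Or.inr ⟨x :: l1, a, b, l2, by rw [heq]; rfl, ?_, hba⟩
          rw [List.cons_append]
          refine List.isChain_cons.2 ⟨?_, hch⟩
          intro z hz
          -- head? (l1 ++ [a]) = head? (l1 ++ a :: b :: l2) = some y
          have : (l1 ++ [a]).head? = (y : V) := by
            cases l1 with
            | nil => simp at heq ⊢; exact heq.1.symm
            | cons c l1' => simp at heq ⊢; exact heq.1.symm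
          rw [this] at hz
          simp at hz; subst hz; exact hE
      · have hyx : E y x := hxy.resolve_left hE
        exact Or.inr ⟨[], x, y, t', rfl, List.isChain_singleton x, hyx⟩

/-- last edge of a directed chain -/
lemma last_edge : ∀ (t : List V) (x v : V), List.Chain' E (x :: t) → t ≠ [] →
    (x :: t).getLast? = some v → ∃ w ∈ x :: t, E w v := by
  intro t
  induction t with
  | nil => intro x v _ h; exact absurd rfl h
  | cons y t' ih =>
    intro x v hc _ hl
    cases t' with
    | nil =>
      simp at hl; subst hl
      exact ⟨x, List.mem_cons_self, (List.isChain_cons_cons.1 hc).1⟩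
    | cons z t'' =>
      have hct : List.Chain' E (y :: z :: t'') := (List.isChain_cons_cons.1 hc).2
      have hl' : (y :: z :: t'').getLast? = some v := by
        rw [← hl]; simp [List.getLast?]
      rcases ih y v hct (by simp) hl' with ⟨w, hw, hwv⟩
      exact ⟨w, List.mem_cons_of_mem _ hw, hwv⟩

/-- uniqueness of decomposition at a nodup element -/
lemma eq_of_append_cons : ∀ (l1 l2 r1 r2 : List V) (x : V),
    l1 ++ x :: r1 = l2 ++ x :: r2 → x ∉ l1 → x ∉ l2 → l1 = l2 ∧ r1 = r2 := by
  intro l1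
  induction l1 with
  | nil =>
    intro l2 r1 r2 x h _ hx2
    cases l2 with
    | nil => simp at h; exact ⟨rfl, h⟩
    | cons a l2' =>
      simp at h
      exact absurd (h.1 ▸ (List.mem_cons_self (a := a) (l := l2'))) (by rw [h.1] at hx2 ⊢; exact hx2)
  | cons a l1' ih =>
    intro l2 r1 r2 x h hx1 hx2
    cases l2 with
    | nil =>
      simp at h
      obtain ⟨rfl, -⟩ := h
      exact absurd ((List.mem_cons_self (a := a) (l := l1'))) hx1
    | cons b l2' =>
      simp at h
      obtain ⟨rfl, h2⟩ := h
      have := ih l2' r1 r2 x h2 (fun hm => hx1 (List.mem_cons_of_mem _ hm))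
        (fun hm => hx2 (List.mem_cons_of_mem _ hm))
      exact ⟨by rw [this.1], this.2⟩

end Helpers

/-- distinct sources of `S̄` are d-separated given the prefix set `S`. -/
theorem sources_dsep {V : Type*} [Fintype V] (E : V → V → Prop)
    (hacyc : Acyclic E) (S : Set V) (hS : IsPrefixSet E S)
    (u v : V) (hu : u ∈ srcOf E Sᶜ) (hv : v ∈ srcOf E Sᶜ) (huv : u ≠ v) :
    DSep E S u v := by
  rintro ⟨p, ⟨hchain, hnodup, hhead, hlast⟩, hact⟩
  have huS : u ∈ Sᶜ := hu.1
  have hvS : v ∈ Sᶜ := hv.1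
  have hcolS : ∀ x ∈ p, IsCollider E p x → x ∈ S := by
    intro x hx hc
    obtain ⟨d, hrtg, hdS⟩ := hact.1 x hx hc
    exact prefix_rtg E hS hrtg hdS
  rcases first_flip E p hchain with hfwd | ⟨l1, a, b, l2, heq, hch, hba⟩
  · -- all edges forward
    cases hp : p with
    | nil => rw [hp] at hhead; simp at hhead
    | cons x t =>
      rw [hp] at hhead hlast hnodup hcolS
      have hfwd' := hfwd; rw [hp] at hfwd'
      simp only [List.head?_cons, Option.some.injEq] at hhead
      subst x
      have ht : t ≠ [] := by
        rintro rfl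
        simp [List.getLast?] at hlast
        exact huv hlast
      obtain ⟨w, hwmem, hwv⟩ := last_edge E t u v hfwd' ht hlast
      have hnc : ¬ IsCollider E p w := by
        rintro ⟨m1, x1, y1, m2, hpe, hx1, hy1⟩
        have hf2 := hfwd
        rw [hpe] at hf2
        have h3 : List.Chain' E (x1 :: w :: y1 :: m2) :=
          (List.isChain_append.1 hf2).2.1
        have hwy : E w y1 := (List.isChain_cons_cons.1 (List.isChain_cons_cons.1 h3).2).1
        exact hacyc w ((TransGen.single hwy).tail hy1)
      have hwS : w ∉ S := hact.2 w (hp ▸ hwmem) hnc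
      exact hv.2 w hwv hwS
  · cases l1 with
    | nil =>
      simp only [List.nil_append] at heq
      rw [heq] at hhead
      simp only [List.head?_cons, Option.some.injEq] at hhead
      subst a
      have hbS : b ∈ S := by
        have := hu.2 b hba
        simpa using this
      cases l2 with
      | nil =>
        rw [heq] at hlast
        simp [List.getLast?] at hlast
        subst hlast
        exact hvS hbS
      | cons c l2' =>
        have hbmem : b ∈ p := by rw [heq]; simp
        have hnc : ¬ IsCollider E p b := by
          rintro ⟨m1, x1, y1, m2, hpe, hx1, hy1⟩
          rw [heq] at hpe hnodup
          have hpe' : u :: b :: c :: l2' = (m1 ++ [x1]) ++ b :: y1 :: m2 := by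
            simpa using hpe
          have hbu : b ∉ [u] := by
            intro hm
            simp at hm
            subst hm
            exact (List.nodup_cons.1 hnodup).1 (List.mem_cons_self)
          have hbm : b ∉ m1 ++ [x1] := by
            intro hm
            have hn2 := hnodup
            rw [hpe'] at hn2
            exact (List.nodup_append.1 hn2).2.2 b hm b List.mem_cons_self rfl
          have hdec := eq_of_append_cons [u] (m1 ++ [x1]) (c :: l2') (y1 :: m2) b
            (by simpa using hpe') hbu hbm
          have hx1u : x1 = u := by
            cases m1 with
            | nil => simpa using hdec.1.symm
            | cons d m1' =>
              have := congrArg List.length hdec.1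
              simp at this
          subst hx1u
          exact hacyc b ((TransGen.single hba).tail hx1)
        exact (hact.2 b hbmem hnc) hbS
    | cons c0 l1' =>
      rw [heq] at hhead
      simp only [List.cons_append, List.head?_cons, Option.some.injEq] at hhead
      subst c0
      obtain ⟨l1'', c, hcc⟩ := (List.eq_nil_or_concat (u :: l1')).resolve_left (by simp)
      have hca : E c a := by
        have hch2 := hch
        rw [hcc] at hch2
        have := (List.isChain_append.1 (by simpa using hch2 :
          List.Chain' E (l1'' ++ [c] ++ [a]))).2.2
        exact this c (by simp) a (by simp)
      have hamem : a ∈ p := by rw [heq]; simp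
      have hcol : IsCollider E p a := by
        refine ⟨l1'', c, b, l2, ?_, hca, hba⟩
        rw [heq, hcc]
        simp
      have haS : a ∈ S := hcolS a hamem hcol
      have hch3 : List.Chain' E (u :: (l1' ++ [a])) := by
        simpa using hch
      have hreach : ReflTransGen E u a :=
        chain_reach E (l1' ++ [a]) u hch3 a (by simp)
      exact huS (prefix_rtg E hS hreach haS)
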